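/- Let F be a field and n ≥ 3. Every subring of T_n(F) that strictly contains D_n(F) contains a non-trivial idempotent. -/

import Mathlib

/-- A ring is *i-reversible* if whenever `a * b` is a non-zero idempotent, `b * a` is an
idempotent. -/
def IsIReversible (S : Type*) [Ring S] : Prop :=
  ∀ a b : S, IsIdempotentElem (a * b) → a * b ≠ 0 → IsIdempotentElem (b * a)

/-- A ring is *reversible* if `a * b = 0` implies `b * a = 0`. -/
def IsReversible (S : Type*) [Ring S] : Prop :=
  ∀ a b : S, a * b = 0 → b * a = 0

/-- A ring has only trivial idempotents if its only idempotents are `0` and `1`. -/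
def HasOnlyTrivialIdempotents (S : Type*) [Ring S] : Prop :=
  ∀ e : S, IsIdempotentElem e → e = 0 ∨ e = 1

/-- Upper triangular predicate for square matrices. -/
def Matrix.IsUpperTri {n : ℕ} {R : Type*} [Zero R] (A : Matrix (Fin n) (Fin n) R) : Prop :=
  ∀ ⦃i j : Fin n⦄, j < i → A i j = 0

lemma Matrix.IsUpperTri.mul {n : ℕ} {R : Type*} [Ring R]
    {A B : Matrix (Fin n) (Fin n) R} (hA : A.IsUpperTri) (hB : B.IsUpperTri) :
    (A * B).IsUpperTri := by
  intro i j h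
  rw [Matrix.mul_apply]
  refine Finset.sum_eq_zero fun k _ => ?_
  rcases lt_or_ge k i with hk | hk
  · rw [hA hk, zero_mul]
  · rw [hB (lt_of_lt_of_le h hk), mul_zero]

/-- The ring `T_n(R)` of upper triangular `n × n` matrices, as a subring of the matrix ring. -/
def triangularRing (n : ℕ) (R : Type*) [Ring R] :
    Subring (Matrix (Fin n) (Fin n) R) where
  carrier := {A | A.IsUpperTri}
  mul_mem' ha hb := ha.mul hb
  one_mem' := fun i j h => by simp [Matrix.one_apply, (ne_of_lt h).symm]
  add_mem' ha hb := fun i j h => by simp [Matrix.add_apply, ha h, hb h]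
  zero_mem' := fun i j h => rfl
  neg_mem' ha := fun i j h => by simp [ha h]

lemma diag_mul_upperTri {n : ℕ} {R : Type*} [Ring R]
    {A B : Matrix (Fin n) (Fin n) R} (hA : A.IsUpperTri)
    (hB : B.IsUpperTri) (i : Fin n) : (A * B) i i = A i i * B i i := by
  rw [Matrix.mul_apply]
  refine Finset.sum_eq_single i (fun k _ hk => ?_) (by simp)
  rcases lt_or_gt_of_ne hk with h | h
  · rw [hA h, zero_mul]
  · rw [hB h, mul_zero]

/-- The ring `D_n(R)` of upper triangular `n × n` matrices with constant diagonal. -/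
def constDiagRing (n : ℕ) (R : Type*) [Ring R] :
    Subring (Matrix (Fin n) (Fin n) R) where
  carrier := {A | A.IsUpperTri ∧ ∀ i j : Fin n, A i i = A j j}
  mul_mem' := by
    rintro A B ⟨hA, hA'⟩ ⟨hB, hB'⟩
    refine ⟨hA.mul hB, fun i j => ?_⟩
    rw [diag_mul_upperTri hA hB, diag_mul_upperTri hA hB, hA' i j, hB' i j]
  one_mem' := ⟨fun i j h => by simp [Matrix.one_apply, (ne_of_lt h).symm], by simp⟩
  add_mem' := by
    rintro A B ⟨hA, hA'⟩ ⟨hB, hB'⟩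
    exact ⟨fun i j h => by simp [Matrix.add_apply, hA h, hB h],
      fun i j => by simp [Matrix.add_apply, hA' i j, hB' i j]⟩
  zero_mem' := ⟨fun i j h => rfl, by simp⟩
  neg_mem' := by
    rintro A ⟨hA, hA'⟩
    exact ⟨fun i j h => by simp [hA h], fun i j => by simp [hA' i j]⟩

/-- Over a field `F` and for `n ≥ 3`, every subring of `T_n(F)` strictly containing `D_n(F)`
contains a non-trivial idempotent. -/
theorem exists_nontrivial_idempotent_of_gt_constDiagRing (F : Type*) [Field F] (n : ℕ)
    (hn : 3 ≤ n) (S : Subring (Matrix (Fin n) (Fin n) F)) (hST : S ≤ triangularRing n F)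
    (hDS : constDiagRing n F < S) :
    ∃ e ∈ S, IsIdempotentElem e ∧ e ≠ 0 ∧ e ≠ 1 := by
  classical
  -- Pick a matrix in `S` whose diagonal is not constant.
  obtain ⟨A, hAS, hAD⟩ := SetLike.exists_of_lt hDS
  have hAT : A.IsUpperTri := hST hAS
  -- Its diagonal is not constant.
  have hdiag : ∃ i j : Fin n, A i i ≠ A j j := by
    by_contra h
    push_neg at h
    exact hAD ⟨hAT, h⟩
  obtain ⟨i, j, hij⟩ := hdiag
  set d : Fin n → F := fun k => A k k with hd
  -- The strictly upper triangular part of `A` lies in `D_n(F) ⊆ S`.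
  have hN : A - Matrix.diagonal d ∈ constDiagRing n F := by
    refine ⟨fun a b hab => ?_, fun a b => ?_⟩
    · simp [Matrix.sub_apply, hAT hab, Matrix.diagonal_apply_ne' _ (ne_of_lt hab)]
    · simp [Matrix.sub_apply, Matrix.diagonal_apply_eq, hd]
  have hDmem : Matrix.diagonal d ∈ S := by
    have := S.sub_mem hAS (hDS.le hN)
    simpa using this
  -- Scalars are in S
  have hscal : ∀ c : F, (c • (1 : Matrix (Fin n) (Fin n) F)) ∈ S := by
    intro c
    refine hDS.le ⟨fun a b hab => ?_, fun a b => ?_⟩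
    · simp [Matrix.one_apply, (ne_of_lt hab).symm]
    · simp
  -- Evaluate polynomials at `diagonal d`, staying in `S`.
  have haeval : ∀ p : Polynomial F, Polynomial.aeval (Matrix.diagonal d) p ∈ S := by
    intro p
    induction p using Polynomial.induction_on' with
    | add p q hp hq => rw [map_add]; exact S.add_mem hp hq
    | monomial k c =>
        rw [Polynomial.aeval_monomial]
        have : (algebraMap F (Matrix (Fin n) (Fin n) F)) c = c • 1 := by
          simp [Algebra.algebraMap_eq_smul_one]
        rw [this]
        exact S.mul_mem (hscal c) (S.pow_mem hDmem k)
  -- aeval at a diagonal matrix is the diagonal of the pointwise evals.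
  have haeval_diag : ∀ p : Polynomial F,
      Polynomial.aeval (Matrix.diagonal d) p
        = Matrix.diagonal (fun k => Polynomial.eval (d k) p) := by
    intro p
    have h1 : Polynomial.aeval (Matrix.diagonal d) p
        = (Matrix.diagonalAlgHom (R := F) (n := Fin n)) (Polynomial.aeval d p) := by
      rw [← Polynomial.aeval_algHom_apply]
      rfl
    rw [h1]
    have h2 : (Polynomial.aeval d p) = fun k => Polynomial.eval (d k) p := by
      funext k
      have := Polynomial.aeval_algHom_apply (Pi.evalAlgHom F (fun _ : Fin n => F) k) d p
      simp only [Pi.evalAlgHom_apply, Polynomial.coe_aeval_eq_eval] at this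
      exact this.symm
    rw [h2]
    rfl
  -- Lagrange basis polynomial at node `d i` over the set of diagonal values.
  set s : Finset F := Finset.image d Finset.univ with hs
  set p : Polynomial F := Lagrange.basis s id (d i) with hp
  have hdi : d i ∈ s := Finset.mem_image_of_mem d (Finset.mem_univ i)
  have hpval : ∀ k : Fin n, Polynomial.eval (d k) p = if d k = d i then 1 else 0 := by
    intro k
    by_cases h : d k = d i
    · rw [h, if_pos rfl]
      have := Lagrange.eval_basis_self (v := (id : F → F)) (s := s)
        (Set.injOn_id _) hdi
      simpa using this
    · rw [if_neg h]
      have hdk : d k ∈ s := Finset.mem_image_of_mem d (Finset.mem_univ k)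
      have := Lagrange.eval_basis_of_ne (v := (id : F → F)) (s := s)
        (i := d i) (j := d k) (fun hh => h hh.symm) hdk
      simpa using this
  refine ⟨Polynomial.aeval (Matrix.diagonal d) p, haeval p, ?_, ?_, ?_⟩
  · rw [haeval_diag]
    unfold IsIdempotentElem
    rw [Matrix.diagonal_mul_diagonal]
    refine congrArg Matrix.diagonal (funext fun k => ?_)
    rw [hpval k]
    by_cases h : d k = d i <;> simp [h]
  · rw [haeval_diag]
    intro h
    have := congrFun (congrFun h i) i
    rw [Matrix.diagonal_apply_eq, hpval i, if_pos rfl] at this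
    simp at this
  · rw [haeval_diag]
    intro h
    have := congrFun (congrFun h j) j
    rw [Matrix.diagonal_apply_eq, hpval j, if_neg (fun hh => hij hh.symm)] at this
    simp [Matrix.one_apply] at this
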